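/- For m ≥ n ≥ 3, the graph G_{n,m} with terminals s and t satisfies N_{m-1}(G_{n,m},s,t) = n-2 and N_{n-2}(G_{n,m},s,t) = 1 + (n-2)(m-n+2). -/

import Mathlib

/-- A finite loopless multigraph: a finite vertex type `V`, a finite edge type `E`,
and an endpoint map assigning to each edge an unordered pair of distinct vertices. -/
structure Multigraph where
  V : Type
  E : Type
  [fintV : Fintype V]
  [fintE : Fintype E]
  [decV : DecidableEq V]
  [decE : DecidableEq E]
  ends : E → Sym2 V
  loopless : ∀ e, ¬ (ends e).IsDiag

attribute [instance] Multigraph.fintV Multigraph.fintE Multigraph.decV Multigraph.decE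

namespace Multigraph

/-- The simple graph on `G.V` underlying the spanning subgraph of `G` with edge set `E'`. -/
def subgraph (G : Multigraph) (E' : Finset G.E) : SimpleGraph G.V where
  Adj u v := u ≠ v ∧ ∃ e ∈ E', G.ends e = s(u, v)
  symm := by
    constructor
    rintro u v ⟨huv, e, he, hends⟩
    exact ⟨huv.symm, e, he, hends.trans (Sym2.eq_swap)⟩
  loopless := by constructor; rintro u ⟨h, -⟩; exact h rfl

/-- The spanning subgraph of `G` with edge set `E'` has exactly two connected components,
one containing `s` and the other containing `t`. -/
def SplitState (G : Multigraph) (s t : G.V) (E' : Finset G.E) : Prop :=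
  ¬ (G.subgraph E').Reachable s t ∧
    ∀ v : G.V, (G.subgraph E').Reachable v s ∨ (G.subgraph E').Reachable v t

open scoped Classical in
/-- The split reliability of `G` with terminals `s` and `t`, at edge probability `p`. -/
noncomputable def sRel (G : Multigraph) (s t : G.V) (p : ℝ) : ℝ :=
  ∑ E' : Finset G.E, if G.SplitState s t E' then
    p ^ E'.card * (1 - p) ^ (Fintype.card G.E - E'.card) else 0

open scoped Classical in
/-- `N_i(G,s,t)`: the number of edge subsets of cardinality `i` whose spanning subgraph has
exactly two connected components, one containing `s` and the other containing `t`. -/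
noncomputable def Nst (G : Multigraph) (s t : G.V) (i : ℕ) : ℕ :=
  (Finset.univ.filter fun E' : Finset G.E => E'.card = i ∧ G.SplitState s t E').card

/-- A multigraph is connected when its underlying simple graph is. -/
def Connected (G : Multigraph) : Prop := (G.subgraph Finset.univ).Connected

open scoped Classical in
/-- The all-terminal reliability of `G` at edge probability `p`. -/
noncomputable def Rel (G : Multigraph) (p : ℝ) : ℝ :=
  ∑ E' : Finset G.E, if (G.subgraph E').Connected then
    p ^ E'.card * (1 - p) ^ (Fintype.card G.E - E'.card) else 0

/-- `G` together with terminals `s ≠ t` is an optimal `(n,m)`-graph for split reliability. -/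
def IsOptimal (n m : ℕ) (G : Multigraph) (s t : G.V) : Prop :=
  G.Connected ∧ Fintype.card G.V = n ∧ Fintype.card G.E = m ∧ s ≠ t ∧
    ∀ (H : Multigraph) (s' t' : H.V), H.Connected → Fintype.card H.V = n →
      Fintype.card H.E = m → s' ≠ t' → ∀ p : ℝ, 0 < p → p < 1 →
        H.sRel s' t' p ≤ G.sRel s t p

/-- An isomorphism of multigraphs taking terminals `s,t` of `G` to terminals `u,v` of `H`. -/
def IsoTerm (G H : Multigraph) (s t : G.V) (u v : H.V) : Prop :=
  ∃ (φ : G.V ≃ H.V) (ψ : G.E ≃ H.E),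
    (∀ e, H.ends (ψ e) = (G.ends e).map φ) ∧ φ s = u ∧ φ t = v

end Multigraph

namespace Multigraph

/-- `Gnm n m k`: the multigraph obtained from a path `v_0, v_1, …, v_{n-1}` (terminals
`s = v_0`, `t = v_{n-1}`) by replacing the path edge from `v_k` to `v_{k+1}` by a bundle of
`m - n + 2` parallel edges (so that the graph has `m` edges in total when `m ≥ n - 1`). -/
def Gnm (n m k : ℕ) (hk : k < n - 1) : Multigraph where
  V := Fin n
  E := Fin m
  ends e :=
    if h : e.val < n - 1 then
      s((⟨e.val, by omega⟩ : Fin n), (⟨e.val + 1, by omega⟩ : Fin n))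
    else
      s((⟨k, by omega⟩ : Fin n), (⟨k + 1, by omega⟩ : Fin n))
  loopless e := by
    by_cases h : e.val < n - 1 <;>
      simp [h, Sym2.mk_isDiag_iff, Fin.ext_iff]

/-- The cycle on `n ≥ 2` vertices. -/
def cycleGraph (n : ℕ) (hn : 2 ≤ n) : Multigraph where
  V := Fin n
  E := Fin n
  ends e := s(e, (⟨(e.val + 1) % n, Nat.mod_lt _ (by omega)⟩ : Fin n))
  loopless e := by
    simp only [Sym2.mk_isDiag_iff, Fin.ext_iff, Fin.val_mk]
    intro hc
    rcases Nat.lt_or_ge (e.val + 1) n with h' | h'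
    · rw [Nat.mod_eq_of_lt h'] at hc; omega
    · have he : e.val + 1 = n := by have := e.isLt; omega
      rw [he, Nat.mod_self] at hc
      omega

/-- The multigraph obtained from `G` by adjoining a new vertex (`none`) joined by a single
new edge to the vertex `u` of `G`. -/
def addPendant (G : Multigraph) (u : G.V) : Multigraph where
  V := Option G.V
  E := Option G.E
  ends e := e.elim s(some u, none) (fun e' => (G.ends e').map some)
  loopless e := by
    cases e with
    | none => simp [Sym2.mk_isDiag_iff]
    | some e' =>
        show ¬ ((G.ends e').map some).IsDiag
        rw [Sym2.isDiag_map (Option.some_injective _)]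
        exact G.loopless e'

/-- The disjoint union of two multigraphs. -/
def disjSum (A B : Multigraph) : Multigraph where
  V := A.V ⊕ B.V
  E := A.E ⊕ B.E
  ends := Sum.elim (fun e => (A.ends e).map Sum.inl) (fun e => (B.ends e).map Sum.inr)
  loopless e := by
    cases e with
    | inl e =>
        show ¬ ((A.ends e).map Sum.inl).IsDiag
        rw [Sym2.isDiag_map Sum.inl_injective]
        exact A.loopless e
    | inr e =>
        show ¬ ((B.ends e).map Sum.inr).IsDiag
        rw [Sym2.isDiag_map Sum.inr_injective]
        exact B.loopless e

/-- The multigraph on three vertices `0, 1, 2` with a bundle of `a` parallel edges between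
`0` and `1` and a bundle of `b` parallel edges between `1` and `2`. -/
def doubleBundle (a b : ℕ) : Multigraph where
  V := Fin 3
  E := Fin (a + b)
  ends e := if e.val < a then s((0 : Fin 3), (1 : Fin 3)) else s((1 : Fin 3), (2 : Fin 3))
  loopless e := by
    by_cases h : e.val < a <;> simp [h, Sym2.mk_isDiag_iff]

/-- The multigraph on three vertices `0, 1, 2` with bundles of `a`, `b`, `c` parallel edges
between `0,1`, between `1,2`, and between `2,0` respectively. -/
def tripleBundle (a b c : ℕ) : Multigraph where
  V := Fin 3
  E := Fin (a + b + c)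
  ends e :=
    if e.val < a then s((0 : Fin 3), (1 : Fin 3))
    else if e.val < a + b then s((1 : Fin 3), (2 : Fin 3))
    else s((2 : Fin 3), (0 : Fin 3))
  loopless e := by
    by_cases h : e.val < a
    · simp [h, Sym2.mk_isDiag_iff]
    · by_cases h' : e.val < a + b <;> simp [h, h', Sym2.mk_isDiag_iff]

/-- The multigraph obtained from a path `v_0, …, v_{n-1}` by replacing the path edge at
position `k₁` by a bundle of `2` parallel edges and the path edge at position `k₂` by a
bundle of `m - n + 1` parallel edges (for `m ≥ n`, `k₁ ≠ k₂`, the graph has `m` edges). -/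
def Gnm2 (n m k₁ k₂ : ℕ) (hk₁ : k₁ < n - 1) (hk₂ : k₂ < n - 1) : Multigraph where
  V := Fin n
  E := Fin m
  ends e :=
    if h : e.val < n - 1 then
      s((⟨e.val, by omega⟩ : Fin n), (⟨e.val + 1, by omega⟩ : Fin n))
    else if e.val = n - 1 then
      s((⟨k₁, by omega⟩ : Fin n), (⟨k₁ + 1, by omega⟩ : Fin n))
    else
      s((⟨k₂, by omega⟩ : Fin n), (⟨k₂ + 1, by omega⟩ : Fin n))
  loopless e := by
    by_cases h : e.val < n - 1
    · simp [h, Sym2.mk_isDiag_iff, Fin.ext_iff]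
    · by_cases h' : e.val = n - 1 <;> simp [h, h', Sym2.mk_isDiag_iff, Fin.ext_iff]

/-- The simple graph on `n ≥ 4` vertices consisting of a path `s = v_0, …, v_{n-3} = t` of
length `n - 3` together with two further vertices `v_{n-2}, v_{n-1}` forming a triangle
with `t`. It has `n` vertices and `n` edges. -/
def triGraph (n : ℕ) (hn : 4 ≤ n) : Multigraph where
  V := Fin n
  E := Fin n
  ends e :=
    if h : e.val < n - 3 then
      s((⟨e.val, by omega⟩ : Fin n), (⟨e.val + 1, by omega⟩ : Fin n))
    else if e.val = n - 3 then
      s((⟨n - 3, by omega⟩ : Fin n), (⟨n - 2, by omega⟩ : Fin n))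
    else if e.val = n - 2 then
      s((⟨n - 2, by omega⟩ : Fin n), (⟨n - 1, by omega⟩ : Fin n))
    else
      s((⟨n - 1, by omega⟩ : Fin n), (⟨n - 3, by omega⟩ : Fin n))
  loopless e := by
    by_cases h : e.val < n - 3
    · simp [h, Sym2.mk_isDiag_iff, Fin.ext_iff]
    · by_cases h' : e.val = n - 3
      · simp only [dif_neg h, if_pos h', Sym2.mk_isDiag_iff, Fin.mk.injEq]; omega
      · by_cases h'' : e.val = n - 2
        · simp only [dif_neg h, if_neg h', if_pos h'', Sym2.mk_isDiag_iff, Fin.mk.injEq]; omega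
        · simp only [dif_neg h, if_neg h', if_neg h'', Sym2.mk_isDiag_iff, Fin.mk.injEq]; omega

end Multigraph


namespace GnmAux

open Multigraph Finset

def pos (n k e : ℕ) : ℕ := if e < n - 1 then e else k

def Cov (n k : ℕ) {m : ℕ} (E' : Finset (Fin m)) (p : ℕ) : Prop :=
  ∃ e ∈ E', pos n k e.val = p

variable {n m k : ℕ}

lemma pos_lt (hk : k < n - 1) (e : ℕ) (he : e < m) : pos n k e < n - 1 := by
  unfold pos; split <;> omega

lemma ends_Gnm (hk : k < n - 1) (e : Fin m) :
    (Gnm n m k hk).ends e =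
      s((⟨pos n k e.val, by have := pos_lt hk e.val e.isLt; omega⟩ : Fin n),
        (⟨pos n k e.val + 1, by have := pos_lt hk e.val e.isLt; omega⟩ : Fin n)) := by
  show (if h : (e : ℕ) < n - 1 then _ else _) = _
  unfold pos
  by_cases h : (e : ℕ) < n - 1 <;> simp [h] <;> rfl

lemma adj_iff (hk : k < n - 1) (E' : Finset (Fin m)) (u v : Fin n) :
    ((Gnm n m k hk).subgraph E').Adj u v ↔
      ∃ p, Cov n k E' p ∧ p < n - 1 ∧
        ((u.val = p ∧ v.val = p + 1) ∨ (u.val = p + 1 ∧ v.val = p)) := by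
  constructor
  · rintro ⟨hne, e, he, hends⟩
    have hends := (ends_Gnm hk e).symm.trans hends
    have hp : pos n k e.val < n - 1 := pos_lt hk e.val e.isLt
    refine ⟨pos n k e.val, ⟨e, he, rfl⟩, hp, ?_⟩
    replace hends := Sym2.eq_iff.1 hends
    rcases hends with ⟨h1, h2⟩ | ⟨h1, h2⟩
    · exact Or.inl ⟨by rw [← h1], by rw [← h2]⟩
    · exact Or.inr ⟨by rw [← h2], by rw [← h1]⟩
  · rintro ⟨p, ⟨e, he, hpe⟩, hp, hcase⟩
    have hne : u ≠ v := by
      intro h; subst h; omega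
    refine ⟨hne, e, he, ?_⟩
    subst hpe
    refine (ends_Gnm hk e).trans (Sym2.eq_iff.2 ?_)
    rcases hcase with ⟨h1, h2⟩ | ⟨h1, h2⟩
    · exact Or.inl ⟨Fin.ext h1.symm, Fin.ext h2.symm⟩
    · exact Or.inr ⟨Fin.ext h2.symm, Fin.ext h1.symm⟩

lemma side_of_uncov (hk : k < n - 1) (E' : Finset (Fin m)) (j : ℕ)
    (hjcov : ¬ Cov n k E' j) {u v : Fin n}
    (h : ((Gnm n m k hk).subgraph E').Reachable u v) : (u.val ≤ j ↔ v.val ≤ j) := by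
  obtain ⟨w⟩ := h
  induction w with
  | nil => exact Iff.rfl
  | cons hadj _ ih =>
    refine Iff.trans ?_ ih
    rw [adj_iff hk] at hadj
    obtain ⟨p, hcp, hp, hcase⟩ := hadj
    have hpj : p ≠ j := fun h => hjcov (h ▸ hcp)
    omega

lemma reach_of_cov (hk : k < n - 1) (E' : Finset (Fin m)) (a b : ℕ) (hab : a ≤ b) :
    ∀ (hb : b < n), (∀ p, a ≤ p → p < b → Cov n k E' p) →
      ((Gnm n m k hk).subgraph E').Reachable ⟨a, by omega⟩ ⟨b, hb⟩ := by
  induction b, hab using Nat.le_induction with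
  | base => intro hb _; exact SimpleGraph.Reachable.refl _
  | succ b hab ih =>
    intro hb hcov
    have h1 := ih (by omega) (fun p h1 h2 => hcov p h1 (by omega))
    have hcb := hcov b hab (by omega)
    have hbn : b < n - 1 := by
      obtain ⟨e, he, hpe⟩ := hcb
      have := pos_lt hk e.val e.isLt
      omega
    have h2 : ((Gnm n m k hk).subgraph E').Adj ⟨b, by omega⟩ ⟨b + 1, hb⟩ :=
      (adj_iff hk E' _ _).2 ⟨b, hcb, hbn, Or.inl ⟨rfl, rfl⟩⟩
    exact h1.trans h2.reachable

lemma split_iff (hn : 3 ≤ n) (hk : k < n - 1) (E' : Finset (Fin m)) :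
    (Gnm n m k hk).SplitState ⟨0, by omega⟩ ⟨n - 1, by omega⟩ E' ↔
      ∃ j, j < n - 1 ∧ ¬ Cov n k E' j ∧
        ∀ j', j' < n - 1 → ¬ Cov n k E' j' → j' = j := by
  constructor
  · rintro ⟨hns, hall⟩
    have hex : ∃ j, j < n - 1 ∧ ¬ Cov n k E' j := by
      by_contra hc
      push_neg at hc
      exact hns (reach_of_cov hk E' 0 (n-1) (by omega) (by omega)
        (fun p _ h2 => hc p h2))
    obtain ⟨j, hj, hjun⟩ := hex
    refine ⟨j, hj, hjun, ?_⟩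
    intro j' hj' hj'un
    by_contra hne
    -- two distinct uncovered positions j, j' : derive contradiction
    have key : ∀ a b : ℕ, a < b → b < n - 1 → ¬ Cov n k E' a → ¬ Cov n k E' b → False := by
      intro a b hab hbn ha hb
      have hv : (a + 1 : ℕ) < n := by omega
      rcases hall ⟨a + 1, hv⟩ with hr | hr
      · have := side_of_uncov hk E' a ha hr
        simp only at this
        omega
      · have := side_of_uncov hk E' b hb hr
        simp only at this
        omega
    rcases Nat.lt_or_ge j' j with h | h
    · exact key j' j h hj hj'un hjun
    · exact key j j' (by omega) hj' hjun hj'un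
  · rintro ⟨j, hj, hjun, huniq⟩
    constructor
    · intro hr
      have := side_of_uncov hk E' j hjun hr
      simp only at this
      omega
    · intro v
      rcases le_or_gt v.val j with h | h
      · left
        have hr := reach_of_cov hk E' 0 v.val (by omega) v.isLt
          (fun p h1 h2 => by
            by_contra hc
            have := huniq p (by omega) hc
            omega)
        have hv : (⟨v.val, v.isLt⟩ : Fin n) = v := rfl
        rw [hv] at hr
        exact hr.symm
      · right
        have hr := reach_of_cov hk E' v.val (n - 1) (by omega) (by omega)
          (fun p h1 h2 => by
            by_contra hc
            have := huniq p (by omega) hc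
            omega)
        have hv : (⟨v.val, by omega⟩ : Fin n) = v := rfl
        rw [hv] at hr
        exact hr

lemma card_filter_fin (P : ℕ → Prop) [DecidablePred P] (S : Finset ℕ) (hS : ∀ x ∈ S, x < m)
    (hiff : ∀ x, x < m → (P x ↔ x ∈ S)) :
    ((univ : Finset (Fin m)).filter (fun e => P e.val)).card = S.card := by
  apply Finset.card_bij (fun e _ => e.val)
  · intro a ha; rw [mem_filter] at ha; exact (hiff a.val a.isLt).1 ha.2
  · intro a _ b _ h; exact Fin.ext h
  · intro b hb; exact ⟨⟨b, hS b hb⟩, mem_filter.2 ⟨mem_univ _, (hiff b (hS b hb)).2 hb⟩, rfl⟩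

lemma card_T (hn : 3 ≤ n) (hm : n ≤ m) (hk : k < n - 1) :
    ((univ : Finset (Fin m)).filter (fun e => e.val < n - 1 ∧ e.val ≠ k)).card = n - 2 := by
  rw [card_filter_fin (fun e => e < n - 1 ∧ e ≠ k) ((range (n-1)).erase k)
    (fun x hx => by rw [mem_erase, mem_range] at hx; omega)
    (fun x hx => by rw [mem_erase, mem_range]; constructor <;> (intro h; omega))]
  rw [card_erase_of_mem (mem_range.2 hk), card_range]; omega

lemma card_T' (hn : 3 ≤ n) (hm : n ≤ m) (hk : k < n - 1) (j : ℕ) (hj : j < n - 1) (hjk : j ≠ k) :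
    ((univ : Finset (Fin m)).filter
      (fun e => e.val < n - 1 ∧ e.val ≠ k ∧ e.val ≠ j)).card = n - 3 := by
  rw [card_filter_fin (fun e => e < n - 1 ∧ e ≠ k ∧ e ≠ j) (((range (n-1)).erase k).erase j)
    (fun x hx => by rw [mem_erase, mem_erase, mem_range] at hx; omega)
    (fun x hx => by rw [mem_erase, mem_erase, mem_range]; constructor <;> (intro h; omega))]
  rw [card_erase_of_mem (mem_erase.2 ⟨hjk, mem_range.2 hj⟩),
    card_erase_of_mem (mem_range.2 hk), card_range]; omega

lemma card_B (hn : 3 ≤ n) (hm : n ≤ m) (hk : k < n - 1) :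
    ((univ : Finset (Fin m)).filter (fun e => pos n k e.val = k)).card = m - n + 2 := by
  rw [card_filter_fin (fun e => pos n k e = k) (insert k (Finset.Ico (n-1) m))
    (fun x hx => by rw [mem_insert, mem_Ico] at hx; omega)
    (fun x hx => by rw [mem_insert, mem_Ico]; simp only [pos]; split <;> (constructor <;> omega))]
  rw [card_insert_of_notMem (by rw [mem_Ico]; omega), Nat.card_Ico]
  omega

lemma cov_erase (hn : 3 ≤ n) (hm : n ≤ m) (hk : k < n - 1) (e : Fin m)
    (he1 : e.val < n - 1) (he2 : e.val ≠ k) (j : ℕ) (hj : j < n - 1) :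
    Cov n k ((univ : Finset (Fin m)).erase e) j ↔ j ≠ e.val := by
  constructor
  · rintro ⟨f, hf, hpf⟩ h
    subst h
    rw [mem_erase] at hf
    unfold pos at hpf
    split at hpf
    · exact hf.1 (Fin.ext hpf)
    · exact he2 hpf.symm
  · intro hne
    refine ⟨⟨j, by omega⟩, mem_erase.2 ⟨fun h => ?_, mem_univ _⟩, ?_⟩
    · have hvv : j = e.val := congrArg Fin.val h
      by_cases hjk : j = k <;> omega
    · show pos n k j = j
      unfold pos; split <;> omega

lemma part1 (hn : 3 ≤ n) (hm : n ≤ m) (hk : k < n - 1) :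
    (Gnm n m k hk).Nst ⟨0, by omega⟩ ⟨n - 1, by omega⟩ (m - 1) = n - 2 := by
  classical
  unfold Multigraph.Nst
  show (Finset.filter (fun E' : Finset (Fin m) => E'.card = m - 1 ∧
      (Gnm n m k hk).SplitState ⟨0, by omega⟩ ⟨n - 1, by omega⟩ E') univ).card = _
  rw [Finset.filter_congr_decidable]
  rw [← card_T hn hm hk]
  refine (Finset.card_bij (fun e _ => (univ : Finset (Fin m)).erase e) ?_ ?_ ?_).symm
  · intro e he
    rw [mem_filter] at he
    obtain ⟨-, he1, he2⟩ := he
    refine mem_filter.2 ⟨mem_univ _, ?_, ?_⟩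
    · rw [card_erase_of_mem (mem_univ e), card_univ, Fintype.card_fin]
    · rw [split_iff hn hk]
      refine ⟨e.val, he1, ?_, ?_⟩
      · rw [cov_erase hn hm hk e he1 he2 _ he1]; simp
      · intro j' hj' hj'un
        by_contra hne
        exact hj'un ((cov_erase hn hm hk e he1 he2 j' hj').2 hne)
  · intro a _ b _ h
    by_contra hab
    have h1 : a ∈ (univ : Finset (Fin m)).erase b := mem_erase.2 ⟨hab, mem_univ _⟩
    have h2 : (univ : Finset (Fin m)).erase a = univ.erase b := h
    rw [← h2] at h1
    exact (mem_erase.1 h1).1 rfl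
  · intro E' hE'
    replace hE' := mem_filter.1 hE'
    obtain ⟨-, hcard, hsplit⟩ := hE'
    have hne : E' ≠ univ := by
      intro h
      have h2 : (univ : Finset (Fin m)).card = m - 1 := h ▸ hcard
      rw [card_univ, Fintype.card_fin] at h2
      omega
    obtain ⟨e, -, heE⟩ := Finset.exists_of_ssubset (Finset.ssubset_univ_iff.2 hne)
    have hEe : (univ : Finset (Fin m)).erase e = E' := by
      refine (Finset.eq_of_subset_of_card_le (fun x hx => mem_erase.2 ⟨?_, mem_univ _⟩) ?_).symm
      · rintro rfl; exact heE hx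
      · rw [card_erase_of_mem (mem_univ e), card_univ, Fintype.card_fin, hcard]
    rw [split_iff hn hk] at hsplit
    obtain ⟨j, hj, hjun, -⟩ := hsplit
    have hposek : e.val < n - 1 ∧ e.val ≠ k := by
      by_contra hc
      have hpek : pos n k e.val = k := by
        unfold pos; split <;> omega
      -- then every position < n-1 is covered in E', contradicting hjun
      apply hjun
      rw [← hEe]
      by_cases hek : e.val = k
      · by_cases hjk : j = k
        · refine ⟨⟨n - 1, by omega⟩, mem_erase.2 ⟨fun h => ?_, mem_univ _⟩, ?_⟩
          · have hvv : n - 1 = e.val := congrArg Fin.val h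
            omega
          · show pos n k (n - 1) = j
            unfold pos; split <;> omega
        · refine ⟨⟨j, by omega⟩, mem_erase.2 ⟨fun h => ?_, mem_univ _⟩, ?_⟩
          · have hvv : j = e.val := congrArg Fin.val h
            omega
          · show pos n k j = j
            unfold pos; split <;> omega
      · have hen : n - 1 ≤ e.val := by
          unfold pos at hpek; split at hpek <;> omega
        refine ⟨⟨j, by omega⟩, mem_erase.2 ⟨fun h => ?_, mem_univ _⟩, ?_⟩
        · have hvv : j = e.val := congrArg Fin.val h
          omega
        · show pos n k j = j
          unfold pos; split <;> omega
    exact ⟨e, mem_filter.2 ⟨mem_univ _, hposek⟩, hEe⟩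

lemma cov_insert (hn : 3 ≤ n) (hm : n ≤ m) (hk : k < n - 1) (j : ℕ) (hj : j < n - 1)
    (hjk : j ≠ k) (b : Fin m) (hb : pos n k b.val = k) (p : ℕ) (hp : p < n - 1) :
    Cov n k (insert b ((univ : Finset (Fin m)).filter
      (fun e => e.val < n - 1 ∧ e.val ≠ k ∧ e.val ≠ j))) p ↔ p ≠ j := by
  constructor
  · rintro ⟨f, hf, hpf⟩ h
    subst h
    rw [mem_insert] at hf
    rcases hf with rfl | hf
    · rw [hb] at hpf; exact hjk hpf.symm
    · rw [mem_filter] at hf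
      obtain ⟨-, hf1, hf2, hf3⟩ := hf
      unfold pos at hpf
      rw [if_pos hf1] at hpf
      exact hf3 hpf
  · intro hpj
    by_cases hpk : p = k
    · exact ⟨b, mem_insert_self _ _, hb.trans hpk.symm⟩
    · refine ⟨⟨p, by omega⟩, mem_insert_of_mem (mem_filter.2 ⟨mem_univ _, hp, hpk, hpj⟩), ?_⟩
      show pos n k p = p
      unfold pos; split <;> omega

lemma b_not_mem (j : ℕ) (b : Fin m) (hb : pos n k b.val = k) :
    b ∉ (univ : Finset (Fin m)).filter
      (fun e => e.val < n - 1 ∧ e.val ≠ k ∧ e.val ≠ j) := by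
  rw [mem_filter]
  rintro ⟨-, h1, h2, -⟩
  unfold pos at hb
  rw [if_pos h1] at hb
  exact h2 hb

lemma part2 (hn : 3 ≤ n) (hm : n ≤ m) (hk : k < n - 1) :
    (Gnm n m k hk).Nst ⟨0, by omega⟩ ⟨n - 1, by omega⟩ (n - 2) =
      1 + (n - 2) * (m - n + 2) := by
  classical
  unfold Multigraph.Nst
  show (Finset.filter (fun E' : Finset (Fin m) => E'.card = n - 2 ∧
      (Gnm n m k hk).SplitState ⟨0, by omega⟩ ⟨n - 1, by omega⟩ E') univ).card = _
  rw [← Finset.card_filter_add_card_filter_not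
    (p := fun E' : Finset (Fin m) => Cov n k E' k)]
  have h_not : (Finset.filter (fun E' : Finset (Fin m) => ¬ Cov n k E' k)
      (Finset.filter (fun E' : Finset (Fin m) => E'.card = n - 2 ∧
        (Gnm n m k hk).SplitState ⟨0, by omega⟩ ⟨n - 1, by omega⟩ E') univ)) =
      {(univ : Finset (Fin m)).filter (fun e => e.val < n - 1 ∧ e.val ≠ k)} := by
    ext E'
    simp only [mem_filter, mem_univ, true_and, mem_singleton]
    constructor
    · rintro ⟨⟨hcard, hsplit⟩, hnocov⟩
      rw [split_iff hn hk] at hsplit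
      obtain ⟨j, hj, hjun, huniq⟩ := hsplit
      refine Finset.eq_of_subset_of_card_le (fun f hf => mem_filter.2 ⟨mem_univ _, ?_⟩) ?_
      · have hfk : pos n k f.val ≠ k := fun h => hnocov ⟨f, hf, h⟩
        unfold pos at hfk
        split at hfk
        · exact ⟨by omega, hfk⟩
        · exact absurd rfl hfk
      · rw [card_T hn hm hk, hcard]
    · rintro rfl
      have hnocov : ¬ Cov n k ((univ : Finset (Fin m)).filter
          (fun e => e.val < n - 1 ∧ e.val ≠ k)) k := by
        rintro ⟨f, hf, hpf⟩
        rw [mem_filter] at hf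
        obtain ⟨-, h1, h2⟩ := hf
        unfold pos at hpf
        rw [if_pos h1] at hpf
        exact h2 hpf
      refine ⟨⟨card_T hn hm hk, ?_⟩, hnocov⟩
      rw [split_iff hn hk]
      refine ⟨k, hk, hnocov, ?_⟩
      intro j' hj' hun
      by_contra hne
      exact hun ⟨⟨j', by omega⟩, mem_filter.2 ⟨mem_univ _, (by omega : j' < n - 1), hne⟩,
        show pos n k j' = j' by unfold pos; split <;> omega⟩
  have h_cov : (Finset.filter (fun E' : Finset (Fin m) => Cov n k E' k)
      (Finset.filter (fun E' : Finset (Fin m) => E'.card = n - 2 ∧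
        (Gnm n m k hk).SplitState ⟨0, by omega⟩ ⟨n - 1, by omega⟩ E') univ)).card =
      (n - 2) * (m - n + 2) := by
    have hPB : ((((range (n-1)).erase k) ×ˢ ((univ : Finset (Fin m)).filter
        (fun e => pos n k e.val = k))).card) = (n - 2) * (m - n + 2) := by
      rw [Finset.card_product, card_erase_of_mem (mem_range.2 hk), card_range,
        card_B hn hm hk]
      have h : n - 1 - 1 = n - 2 := by omega
      rw [h]
    rw [← hPB]
    refine (Finset.card_bij (fun jb _ => insert jb.2 ((univ : Finset (Fin m)).filter
      (fun e => e.val < n - 1 ∧ e.val ≠ k ∧ e.val ≠ jb.1))) ?_ ?_ ?_).symm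
    · rintro ⟨j, b⟩ hjb
      rw [mem_product, mem_erase, mem_range, mem_filter] at hjb
      obtain ⟨⟨hjk, hj⟩, -, hb⟩ := hjb
      have hcard : (insert b ((univ : Finset (Fin m)).filter
          (fun e => e.val < n - 1 ∧ e.val ≠ k ∧ e.val ≠ j))).card = n - 2 := by
        rw [card_insert_of_notMem (b_not_mem j b hb), card_T' hn hm hk j hj hjk]
        omega
      refine mem_filter.2 ⟨(@mem_filter _ _ (fun _ => instDecidableAnd) _ _).2 ⟨mem_univ _, hcard, ?_⟩, ?_⟩
      · rw [split_iff hn hk]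
        refine ⟨j, hj, fun hc => (cov_insert hn hm hk j hj hjk b hb j hj).1 hc rfl, ?_⟩
        intro j' hj' hun
        by_contra hne
        exact hun ((cov_insert hn hm hk j hj hjk b hb j' hj').2 hne)
      · exact (cov_insert hn hm hk j hj hjk b hb k hk).2 (Ne.symm hjk)
    · rintro ⟨j, b⟩ h1 ⟨j', b'⟩ h2 heq
      rw [mem_product, mem_erase, mem_range, mem_filter] at h1 h2
      obtain ⟨⟨hjk, hj⟩, -, hb⟩ := h1
      obtain ⟨⟨hj'k, hj'⟩, -, hb'⟩ := h2
      have heq' : insert b ((univ : Finset (Fin m)).filter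
          (fun e => e.val < n - 1 ∧ e.val ≠ k ∧ e.val ≠ j)) =
          insert b' ((univ : Finset (Fin m)).filter
          (fun e => e.val < n - 1 ∧ e.val ≠ k ∧ e.val ≠ j')) := heq
      have hbb : b' = b := by
        have hmem : b' ∈ insert b ((univ : Finset (Fin m)).filter
            (fun e => e.val < n - 1 ∧ e.val ≠ k ∧ e.val ≠ j)) := by
          rw [heq']; exact mem_insert_self _ _
        rcases mem_insert.1 hmem with h | h
        · exact h
        · exact absurd h (b_not_mem j b' hb')
      have hjj : j' = j := by
        have c1 := cov_insert hn hm hk j hj hjk b hb j' hj'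
        have c2 := cov_insert hn hm hk j' hj' hj'k b' hb' j' hj'
        rw [← heq'] at c2
        by_contra hne
        exact (c2.1 (c1.2 hne)) rfl
      rw [Prod.mk.injEq]
      exact ⟨hjj.symm, hbb.symm⟩
    · intro E' hE'
      rw [mem_filter] at hE'
      replace hE' := And.intro ((@mem_filter _ _ (fun _ => instDecidableAnd) _ _).1 hE'.1) hE'.2
      obtain ⟨⟨-, hcard, hsplit⟩, hcovk⟩ := hE'
      rw [split_iff hn hk] at hsplit
      obtain ⟨j, hj, hjun, huniq⟩ := hsplit
      have hjk : j ≠ k := fun h => hjun (h ▸ hcovk)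
      obtain ⟨b, hbE, hbk⟩ := hcovk
      have hsub : insert b ((univ : Finset (Fin m)).filter
          (fun e => e.val < n - 1 ∧ e.val ≠ k ∧ e.val ≠ j)) ⊆ E' := by
        intro f hf
        rcases mem_insert.1 hf with rfl | hf
        · exact hbE
        · rw [mem_filter] at hf
          obtain ⟨-, hf1, hf2, hf3⟩ := hf
          have hcov : Cov n k E' f.val := by
            by_contra hc
            exact hf3 (huniq f.val (by omega) hc)
          obtain ⟨g, hg, hpg⟩ := hcov
          unfold pos at hpg
          split at hpg
          · exact (Fin.ext hpg : g = f) ▸ hg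
          · exact absurd hpg.symm hf2
      have hEeq : insert b ((univ : Finset (Fin m)).filter
          (fun e => e.val < n - 1 ∧ e.val ≠ k ∧ e.val ≠ j)) = E' := by
        refine Finset.eq_of_subset_of_card_le hsub ?_
        rw [hcard, card_insert_of_notMem (b_not_mem j b hbk),
          card_T' hn hm hk j hj hjk]
        omega
      exact ⟨(j, b), mem_product.2 ⟨mem_erase.2 ⟨hjk, mem_range.2 hj⟩,
        mem_filter.2 ⟨mem_univ _, hbk⟩⟩, hEeq⟩
  rw [h_cov, h_not, card_singleton]
  omega

end GnmAux

/-- For `m ≥ n ≥ 3`, the graph `G_{n,m}` with terminals `s` and `t`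
satisfies `N_{m-1}(G_{n,m},s,t) = n-2` and `N_{n-2}(G_{n,m},s,t) = 1+(n-2)(m-n+2)`. -/
theorem Nst_Gnm (n m : ℕ) (hn : 3 ≤ n) (hm : n ≤ m) (k : ℕ) (hk : k < n - 1) :
    (Multigraph.Gnm n m k hk).Nst (⟨0, by omega⟩ : Fin n) (⟨n - 1, by omega⟩ : Fin n)
        (m - 1) = n - 2 ∧
    (Multigraph.Gnm n m k hk).Nst (⟨0, by omega⟩ : Fin n) (⟨n - 1, by omega⟩ : Fin n)
        (n - 2) = 1 + (n - 2) * (m - n + 2) := by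
  exact ⟨GnmAux.part1 hn hm hk, GnmAux.part2 hn hm hk⟩
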